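/- Let A be an n×n matrix over the max-plus semiring and λ ∈ ℝ. If there exist a vector x ∈ ℝⁿ and natural numbers k₀ and c ≥ 1 such that the orbit x(k) defined by x(0)=x, x(k+1)=A⊗x(k), satisfies x(k+c) = λ·c + x(k) (componentwise) for all k ≥ k₀, then the vector v = max_{1≤i≤c} ( λ·(c−i) + x(k₀+i−1) ) (componentwise max) satisfies A⊗v = λ + v; i.e., v is a max-plus eigenvector of A with eigenvalue λ. -/

import Mathlib

abbrev MP := WithBot ℝ

def mpMul {m n p : ℕ} (A : Matrix (Fin m) (Fin n) MP) (B : Matrix (Fin n) (Fin p) MP) :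
    Matrix (Fin m) (Fin p) MP :=
  fun i j => Finset.univ.sup fun k => A i k + B k j

def mpId (n : ℕ) : Matrix (Fin n) (Fin n) MP :=
  fun i j => if i = j then ((0 : ℝ) : MP) else ⊥

def mpPow {n : ℕ} (A : Matrix (Fin n) (Fin n) MP) : ℕ → Matrix (Fin n) (Fin n) MP
  | 0 => mpId n
  | k + 1 => mpMul A (mpPow A k)

def mpMulVec {n : ℕ} (A : Matrix (Fin n) (Fin n) MP) (v : Fin n → MP) : Fin n → MP :=
  fun i => Finset.univ.sup fun j => A i j + v j

def Regular {n : ℕ} (A : Matrix (Fin n) (Fin n) MP) : Prop := ∀ i, ∃ j, A i j ≠ ⊥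

private lemma mp_const_add {n : ℕ} (A : Matrix (Fin n) (Fin n) MP) (a : MP) (w : Fin n → MP)
    (i : Fin n) : mpMulVec A (fun j => a + w j) i = a + mpMulVec A w i := by
  unfold mpMulVec
  rw [Finset.comp_sup_eq_sup_comp (fun z => a + z)]
  · simp only [Function.comp]
    congr 1; ext j
    exact add_left_comm (A i j) a (w j)
  · intro x y
    exact Monotone.map_sup (fun u v h => add_le_add_right h a) x y
  · exact WithBot.add_bot a

private lemma mp_coe_sup' {β : Type*} (s : Finset β) (hs : s.Nonempty) (f : β → ℝ) :
    ((s.sup' hs f : ℝ) : MP) = s.sup' hs (fun t => ((f t : ℝ) : MP)) :=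
  Finset.comp_sup'_eq_sup'_comp hs _ (fun x y => by simp [WithBot.coe_sup])

private lemma mp_sup'_mulVec {n : ℕ} (A : Matrix (Fin n) (Fin n) MP) {β : Type*} (s : Finset β)
    (hs : s.Nonempty) (w : β → Fin n → MP) (i : Fin n) :
    mpMulVec A (fun j => s.sup' hs (fun t => w t j)) i
      = s.sup' hs (fun t => mpMulVec A (w t) i) := by
  unfold mpMulVec
  have h1 : ∀ j : Fin n, A i j + s.sup' hs (fun t => w t j)
      = s.sup' hs (fun t => A i j + w t j) := fun j =>
    Finset.comp_sup'_eq_sup'_comp hs _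
      (fun x y => Monotone.map_sup (fun u v h => add_le_add_right h _) x y)
  simp only [h1]
  rcases isEmpty_or_nonempty (Fin n) with he | hne
  · simp [Finset.univ_eq_empty]
  · rw [← Finset.sup'_eq_sup Finset.univ_nonempty, Finset.sup'_comm]
    exact Finset.sup'_congr _ rfl fun t _ => (Finset.sup'_eq_sup Finset.univ_nonempty _)

/-- Periodicity of an orbit yields a max-plus eigenvector built as the
componentwise max of shifted orbit points. -/
theorem stmt5 {n : ℕ} (A : Matrix (Fin n) (Fin n) MP) (hA : Regular A) (lam : ℝ)
    (x : ℕ → Fin n → ℝ)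
    (horbit : ∀ k i, ((x (k + 1) i : ℝ) : MP) = mpMulVec A (fun j => ((x k j : ℝ) : MP)) i)
    (k₀ c : ℕ) (hc : 1 ≤ c)
    (hper : ∀ k ≥ k₀, ∀ i, x (k + c) i = lam * c + x k i) :
    ∀ i, mpMulVec A
        (fun j => (((Finset.range c).sup' (Finset.nonempty_range_iff.mpr (by omega))
          (fun t => lam * ((c - (t + 1) : ℕ) : ℝ) + x (k₀ + t) j) : ℝ) : MP)) i
      = (lam : MP) + (((Finset.range c).sup' (Finset.nonempty_range_iff.mpr (by omega))
          (fun t => lam * ((c - (t + 1) : ℕ) : ℝ) + x (k₀ + t) i) : ℝ) : MP) := by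
  intro i
  have hS : (Finset.range c).Nonempty := Finset.nonempty_range_iff.mpr (by omega)
  -- rewrite LHS argument as a sup' of MP-valued functions with the constant split off
  have e1 : (fun j => (((Finset.range c).sup' hS
        (fun t => lam * ((c - (t + 1) : ℕ) : ℝ) + x (k₀ + t) j) : ℝ) : MP))
      = fun j => (Finset.range c).sup' hS
        (fun t => ((lam * ((c - (t + 1) : ℕ) : ℝ) : ℝ) : MP) + ((x (k₀ + t) j : ℝ) : MP)) := by
    funext j
    rw [mp_coe_sup']
    exact Finset.sup'_congr _ rfl fun t _ => by push_cast; rfl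
  -- compute LHS
  have hL : mpMulVec A (fun j => (((Finset.range c).sup' hS
        (fun t => lam * ((c - (t + 1) : ℕ) : ℝ) + x (k₀ + t) j) : ℝ) : MP)) i
      = (Finset.range c).sup' hS
        (fun t => ((lam * ((c - (t + 1) : ℕ) : ℝ) + x (k₀ + t + 1) i : ℝ) : MP)) := by
    rw [e1, mp_sup'_mulVec]
    refine Finset.sup'_congr _ rfl fun t _ => ?_
    rw [mp_const_add, ← horbit (k₀ + t) i]
    push_cast
    rfl
  rw [hL, ← mp_coe_sup']
  -- rewrite RHS
  have hR : (lam : MP) + (((Finset.range c).sup' hS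
        (fun t => lam * ((c - (t + 1) : ℕ) : ℝ) + x (k₀ + t) i) : ℝ) : MP)
      = (((Finset.range c).sup' hS
        (fun t => lam + (lam * ((c - (t + 1) : ℕ) : ℝ) + x (k₀ + t) i)) : ℝ) : MP) := by
    rw [← WithBot.coe_add]
    congr 1
    exact Finset.comp_sup'_eq_sup'_comp hS (fun z => lam + z)
      (fun u v => Monotone.map_sup (fun a b h => add_le_add_right h lam) u v)
  rw [hR]
  congr 1
  -- now a pure real statement
  apply le_antisymm
  · refine Finset.sup'_le _ _ fun t ht => ?_
    rw [Finset.mem_range] at ht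
    by_cases h : t + 1 < c
    · refine Finset.le_sup'_of_le _ (Finset.mem_range.mpr h) (le_of_eq ?_)
      have h2 : (c - (t + 1) : ℕ) = (c - (t + 1 + 1)) + 1 := by omega
      rw [h2]
      push_cast
      ring
    · have ht1 : t + 1 = c := by omega
      refine Finset.le_sup'_of_le _ (Finset.mem_range.mpr (by omega : 0 < c)) (le_of_eq ?_)
      have h3 : (c - (t + 1) : ℕ) = 0 := by omega
      have h4 : k₀ + t + 1 = k₀ + c := by omega
      rw [h3, h4, hper k₀ le_rfl i]
      have h5 : (c : ℝ) = ((c - (0 + 1) : ℕ) : ℝ) + 1 := by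
        exact_mod_cast (congrArg (Nat.cast : ℕ → ℝ) (by omega : c = c - (0 + 1) + 1))
      rw [h5]
      push_cast
      ring
  · refine Finset.sup'_le _ _ fun t ht => ?_
    rw [Finset.mem_range] at ht
    rcases Nat.eq_zero_or_pos t with rfl | hpos
    · refine Finset.le_sup'_of_le _ (Finset.mem_range.mpr (by omega : c - 1 < c)) (le_of_eq ?_)
      have h3 : (c - (c - 1 + 1) : ℕ) = 0 := by omega
      have h4 : k₀ + (c - 1) + 1 = k₀ + c := by omega
      rw [h3, h4, hper k₀ le_rfl i]
      have h5 : (c : ℝ) = ((c - (0 + 1) : ℕ) : ℝ) + 1 := by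
        exact_mod_cast (congrArg (Nat.cast : ℕ → ℝ) (by omega : c = c - (0 + 1) + 1))
      rw [h5]
      push_cast
      ring
    · obtain ⟨s, rfl⟩ : ∃ s, t = s + 1 := ⟨t - 1, by omega⟩
      refine Finset.le_sup'_of_le _ (Finset.mem_range.mpr (by omega : s < c)) (le_of_eq ?_)
      have h2 : (c - (s + 1) : ℕ) = (c - (s + 1 + 1)) + 1 := by omega
      have h4 : k₀ + s + 1 = k₀ + (s + 1) := by omega
      rw [h2, h4]
      push_cast
      ring
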